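/- arXiv:1202.5548 — 6 statements merged into one kernel-verified Lean document; each statement's English description precedes it below -/
import Mathlib

section
/- If all n_i ≤ 2, or if max_i n_i ≤ 3 and at most one n_i equals 3, then the d-dimensional knight's graph K(n_1,…,n_d) is disconnected (provided it has at least 2 vertices). In particular K(n,2,2,…,2) is disconnected for every n. -/
/-- `d`-dimensional knight's graph on the board `[n 0] × ⋯ × [n (d-1)]`. -/
def Kd (d : ℕ) (n : Fin d → ℕ) : SimpleGraph ((i : Fin d) → Fin (n i)) where
  Adj a b := ∃ i j : Fin d, i ≠ j ∧ Nat.dist (a i).val (b i).val = 1 ∧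
    Nat.dist (a j).val (b j).val = 2 ∧ ∀ k, k ≠ i → k ≠ j → a k = b k
  symm := by
    constructor
    rintro a b ⟨i, j, hij, h1, h2, h3⟩
    exact ⟨i, j, hij, by rw [Nat.dist_comm]; exact h1, by rw [Nat.dist_comm]; exact h2,
      fun k hk hk' => (h3 k hk hk').symm⟩
  loopless := by
    constructor
    rintro a ⟨i, j, hij, h1, _, _⟩
    simp [Nat.dist_self] at h1

private lemma reach_inv {V : Type*} {G : SimpleGraph V} (f : V → ℕ)
    (h : ∀ a b, G.Adj a b → f a = f b) {x y : V} (hr : G.Reachable x y) : f x = f y := by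
  obtain ⟨w⟩ := hr
  induction w with
  | nil => rfl
  | cons ha _ ih => exact (h _ _ ha).trans ih

private lemma disconn {V : Type*} {G : SimpleGraph V} (f : V → ℕ)
    (h : ∀ a b, G.Adj a b → f a = f b) (x y : V) (hxy : f x ≠ f y) : ¬ G.Connected :=
  fun hc => hxy (reach_inv f h (hc.preconnected x y))

private lemma dist_two_parity {x y : ℕ} (h : Nat.dist x y = 2) : x % 2 = y % 2 := by
  simp only [Nat.dist] at h; omega

private lemma not_dist_two {x y : ℕ} (hx : x ≤ 1) (hy : y ≤ 1) : Nat.dist x y ≠ 2 := by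
  simp only [Nat.dist]; omega

/-- If all dimensions are at most 2, or all are at most 3 with at most one equal
to 3, then the knight's graph (with at least two vertices) is disconnected.
In particular K(n,2,2,…,2) is disconnected for every n. -/
theorem knight_disconnected_small :
    (∀ (d : ℕ) (n : Fin d → ℕ),
      ((∀ i, n i ≤ 2) ∨ ((∀ i, n i ≤ 3) ∧ {i | n i = 3}.Subsingleton)) →
      1 < Fintype.card ((i : Fin d) → Fin (n i)) →
      ¬ (Kd d n).Connected) ∧
    (∀ (d N : ℕ), 2 ≤ d →
      ¬ (Kd d (fun i => if (i : ℕ) = 0 then N else 2)).Connected) := by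
  constructor
  · intro d n hn hcard
    obtain ⟨x, y, hxy⟩ := Fintype.exists_pair_of_one_lt_card hcard
    by_cases h3 : ∃ i0, n i0 = 3
    · -- a unique coordinate has n = 3; parity at that coordinate is invariant
      obtain ⟨i0, hi0⟩ := h3
      have hle : ∀ i, n i ≤ 3 := by
        rcases hn with h | h
        · exact fun i => le_trans (h i) (by norm_num)
        · exact h.1
      have huniq : ∀ j, n j = 3 → j = i0 := by
        rcases hn with h | h
        · intro j hj; exact absurd (h j) (by omega)
        · intro j hj; exact h.2 hj hi0
      refine disconn (fun w => (w i0).val % 2) ?_ (Function.update x i0 ⟨0, by omega⟩)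
        (Function.update x i0 ⟨1, by omega⟩) (by simp)
      rintro a b ⟨i, j, hij, h1, h2, h3'⟩
      have hj : j = i0 := by
        by_contra hji
        have hnj : n j ≤ 2 := by
          have h33 := hle j
          rcases Nat.eq_or_lt_of_le h33 with he | _
          · exact absurd (huniq j he) hji
          · omega
        have ha := (a j).isLt
        have hb := (b j).isLt
        exact not_dist_two (by omega) (by omega) h2
      rw [← hj]
      exact dist_two_parity h2
    · -- all n i ≤ 2 : there are no edges at all
      push_neg at h3
      have hle : ∀ i, n i ≤ 2 := by
        rcases hn with h | h
        · exact h
        · intro i; have := h.1 i; have := h3 i; omega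
      classical
      refine disconn (fun w => if w = x then 0 else 1) ?_ x y (by simp [hxy.symm])
      rintro a b ⟨i, j, hij, h1, h2, h3'⟩
      exfalso
      have ha := (a j).isLt
      have hb := (b j).isLt
      have := hle j
      exact not_dist_two (by omega) (by omega) h2
  · intro d N hd
    set n : Fin d → ℕ := fun i => if (i : ℕ) = 0 then N else 2 with hn
    have hval : ∀ i : Fin d, ∀ a : Fin (n i), (a : ℕ) < n i := fun i a => a.isLt
    rcases Nat.lt_or_ge N 2 with hN | hN
    · rcases Nat.lt_or_ge N 1 with hN0 | hN1
      · -- N = 0 : no vertices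
        intro hc
        obtain ⟨v⟩ := hc.nonempty
        have h0 := hval ⟨0, by omega⟩ (v ⟨0, by omega⟩)
        simp only [hn] at h0
        norm_num at h0
        omega
      · -- N = 1 : no edges, and two vertices differing at coordinate 1
        have hpos : ∀ i, 0 < n i := by intro i; simp only [hn]; split <;> omega
        have h1lt : 1 < n ⟨1, by omega⟩ := by simp only [hn]; norm_num
        set x : (i : Fin d) → Fin (n i) := fun i => ⟨0, hpos i⟩ with hx
        refine disconn (fun w => (w ⟨1, by omega⟩).val) ?_ x
          (Function.update x ⟨1, by omega⟩ ⟨1, h1lt⟩) (by simp only [Function.update_self]; simp [hx])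
        rintro a b ⟨i, j, hij, h1, h2, h3⟩
        exfalso
        have hnj : n j ≤ 2 := by simp only [hn]; split <;> omega
        have ha := hval j (a j)
        have hb := hval j (b j)
        exact not_dist_two (by omega) (by omega) h2
    · -- N ≥ 2 : parity of coordinate 0 is invariant
      have hpos : ∀ i, 0 < n i := by intro i; simp only [hn]; split <;> omega
      have h1lt : 1 < n ⟨0, by omega⟩ := by simp only [hn]; norm_num; omega
      set x : (i : Fin d) → Fin (n i) := fun i => ⟨0, hpos i⟩ with hx
      refine disconn (fun w => (w ⟨0, by omega⟩).val % 2) ?_ x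
        (Function.update x ⟨0, by omega⟩ ⟨1, h1lt⟩) (by simp only [Function.update_self]; simp [hx])
      rintro a b ⟨i, j, hij, h1, h2, h3⟩
      have hj : j = ⟨0, by omega⟩ := by
        by_contra hji
        have hjv : (j : ℕ) ≠ 0 := fun h => hji (Fin.ext h)
        have hnj : n j ≤ 2 := le_of_eq (by simp only [hn, if_neg hjv])
        have ha := hval j (a j)
        have hb := hval j (b j)
        exact not_dist_two (by omega) (by omega) h2
      rw [← hj]
      exact dist_two_parity h2
end

section
/- The knight's graph K(4,4) has no Hamiltonian cycle, but the 3-dimensional knight's graph K(4,4,2) has a Hamiltonian cycle. -/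
instance KdAdjDecidable (d : ℕ) (n : Fin d → ℕ) : DecidableRel (Kd d n).Adj :=
  fun a b => inferInstanceAs (Decidable (∃ i j : Fin d, i ≠ j ∧
    Nat.dist (a i).val (b i).val = 1 ∧
    Nat.dist (a j).val (b j).val = 2 ∧ ∀ k, k ≠ i → k ≠ j → a k = b k))

namespace KnightAux

open SimpleGraph Walk

variable {V : Type*} {G : SimpleGraph V}

lemma support_getElem? {u v : V} (p : G.Walk u v) : ∀ i : ℕ, i ≤ p.length →
    p.support[i]? = some (p.getVert i) := by
  induction p with
  | nil =>
    intro i hi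
    simp only [Walk.length_nil, Nat.le_zero] at hi
    subst hi
    simp
  | cons h q ih =>
    intro i hi
    cases i with
    | zero => simp
    | succ n =>
      simp only [Walk.support_cons, List.getElem?_cons_succ, Walk.getVert_cons_succ]
      exact ih n (by simpa using hi)

lemma tail_length {u v : V} (p : G.Walk u v) : p.support.tail.length = p.length := by
  simp [Walk.length_support]

lemma cycle_getVert_start {u : V} {c : G.Walk u u} (hc : c.IsCycle) {i : ℕ}
    (hi : i ≤ c.length) (h : c.getVert i = u) : i = 0 ∨ i = c.length := by
  by_contra hcon
  push_neg at hcon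
  obtain ⟨h0, hn⟩ := hcon
  have h3 := hc.three_le_length
  have h1 : c.support.tail[i - 1]? = some u := by
    rw [List.getElem?_tail, Nat.sub_add_cancel (Nat.one_le_iff_ne_zero.2 h0),
      support_getElem? c i hi, h]
  have h2 : c.support.tail[c.length - 1]? = some u := by
    rw [List.getElem?_tail, Nat.sub_add_cancel (by omega),
      support_getElem? c c.length le_rfl, c.getVert_length]
  have hlt : i - 1 < c.support.tail.length := by
    rw [tail_length]; omega
  have := (List.getElem?_inj hlt hc.support_nodup).mp (h1.trans h2.symm)
  omega

lemma cycle_adj_start_iff {u : V} {c : G.Walk u u} (hc : c.IsCycle) (x : V) :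
    c.toSubgraph.Adj u x ↔ x = c.getVert 1 ∨ x = c.getVert (c.length - 1) := by
  have h3 := hc.three_le_length
  constructor
  · intro h
    obtain ⟨i, hi, hlt⟩ := (Walk.toSubgraph_adj_iff c).mp h
    rw [Sym2.eq_iff] at hi
    rcases hi with ⟨hiu, hix⟩ | ⟨hix, hiu⟩
    · have := cycle_getVert_start hc (le_of_lt hlt) hiu
      have hi0 : i = 0 := by omega
      subst hi0
      exact Or.inl hix.symm
    · have := cycle_getVert_start hc (Nat.succ_le_of_lt hlt) hiu
      have hin : i = c.length - 1 := by omega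
      subst hin
      exact Or.inr hix.symm
  · rintro (rfl | rfl)
    · have := c.toSubgraph_adj_getVert (show 0 < c.length by omega)
      simpa using this
    · have h' := c.toSubgraph_adj_getVert (show c.length - 1 < c.length by omega)
      rw [show c.length - 1 + 1 = c.length by omega, c.getVert_length] at h'
      exact h'.symm

lemma cycle_snd_ne {u : V} {c : G.Walk u u} (hc : c.IsCycle) :
    c.getVert 1 ≠ c.getVert (c.length - 1) := by
  have h3 := hc.three_le_length
  intro h
  have h1 : c.support.tail[0]? = some (c.getVert 1) := by
    rw [List.getElem?_tail]; exact support_getElem? c 1 (by omega)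
  have h2 : c.support.tail[c.length - 2]? = some (c.getVert (c.length - 1)) := by
    rw [List.getElem?_tail, show c.length - 2 + 1 = c.length - 1 by omega]
    exact support_getElem? c _ (by omega)
  have hlt : 0 < c.support.tail.length := by rw [tail_length]; omega
  have e : c.support.tail[0]? = c.support.tail[c.length - 2]? := by rw [h1, h2, h]
  have := (List.getElem?_inj hlt hc.support_nodup).mp e
  omega

lemma exists_two [DecidableEq V] {v : V} {w : G.Walk v v} (hw : w.IsCycle) {u : V}
    (hu : u ∈ w.support) :
    ∃ a b, a ≠ b ∧ w.toSubgraph.Adj u a ∧ w.toSubgraph.Adj u b ∧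
      ∀ x, w.toSubgraph.Adj u x → x = a ∨ x = b := by
  have hc := hw.rotate hu
  have hts : (w.rotate u hu).toSubgraph = w.toSubgraph := w.toSubgraph_rotate hu
  refine ⟨(w.rotate u hu).getVert 1, (w.rotate u hu).getVert ((w.rotate u hu).length - 1),
    cycle_snd_ne hc, ?_, ?_, ?_⟩
  · rw [← hts]; exact (cycle_adj_start_iff hc _).mpr (Or.inl rfl)
  · rw [← hts]; exact (cycle_adj_start_iff hc _).mpr (Or.inr rfl)
  · intro x hx
    rw [← hts] at hx
    exact (cycle_adj_start_iff hc x).mp hx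

lemma pair_cases {α : Type*} {a b p q x : α} (hp : p = a ∨ p = b) (hq : q = a ∨ q = b)
    (hpq : p ≠ q) (hx : x = a ∨ x = b) : x = p ∨ x = q := by
  rcases hp with rfl | rfl <;> rcases hq with rfl | rfl <;> tauto

lemma force_two {α : Type*} {H : α → α → Prop} {u p q : α}
    (hN : ∀ x, H u x → x = p ∨ x = q) (hpq : p ≠ q)
    (key : ∃ a b, a ≠ b ∧ H u a ∧ H u b ∧ ∀ x, H u x → x = a ∨ x = b) :
    H u p ∧ H u q := by
  obtain ⟨a, b, hab, ha, hb, -⟩ := key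
  rcases hN a ha with rfl | rfl <;> rcases hN b hb with rfl | rfl <;>
    first
      | exact absurd rfl hab
      | exact ⟨ha, hb⟩
      | exact ⟨hb, ha⟩

lemma mem_of_reach {H : G.Subgraph} {S : Set V}
    (hcl : ∀ x ∈ S, ∀ y, H.Adj x y → y ∈ S) :
    ∀ {a b : H.verts} (_ : H.coe.Walk a b), (a : V) ∈ S → (b : V) ∈ S := by
  intro a b p
  induction p with
  | nil => exact id
  | cons h q ih =>
    intro ha
    exact ih (hcl _ ha _ h)

def V2 (x y : Fin 4) : (i : Fin 2) → Fin (![4, 4] i) :=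
  Fin.cons x (Fin.cons y finZeroElim)

def V3 (x y : Fin 4) (z : Fin 2) : (i : Fin 3) → Fin (![4, 4, 2] i) :=
  Fin.cons x (Fin.cons y (Fin.cons z finZeroElim))

def tour : (Kd 3 ![4, 4, 2]).Walk (V3 0 0 0) (V3 0 0 0) :=
  .cons (by decide) <|
  show (Kd 3 ![4, 4, 2]).Walk (V3 0 2 1) (V3 0 0 0) from .cons (by decide) <|
  show (Kd 3 ![4, 4, 2]).Walk (V3 1 0 1) (V3 0 0 0) from .cons (by decide) <|
  show (Kd 3 ![4, 4, 2]).Walk (V3 3 0 0) (V3 0 0 0) from .cons (by decide) <|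
  show (Kd 3 ![4, 4, 2]).Walk (V3 2 2 0) (V3 0 0 0) from .cons (by decide) <|
  show (Kd 3 ![4, 4, 2]).Walk (V3 0 3 0) (V3 0 0 0) from .cons (by decide) <|
  show (Kd 3 ![4, 4, 2]).Walk (V3 2 3 1) (V3 0 0 0) from .cons (by decide) <|
  show (Kd 3 ![4, 4, 2]).Walk (V3 3 1 1) (V3 0 0 0) from .cons (by decide) <|
  show (Kd 3 ![4, 4, 2]).Walk (V3 1 1 0) (V3 0 0 0) from .cons (by decide) <|
  show (Kd 3 ![4, 4, 2]).Walk (V3 1 3 1) (V3 0 0 0) from .cons (by decide) <|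
  show (Kd 3 ![4, 4, 2]).Walk (V3 3 3 0) (V3 0 0 0) from .cons (by decide) <|
  show (Kd 3 ![4, 4, 2]).Walk (V3 1 2 0) (V3 0 0 0) from .cons (by decide) <|
  show (Kd 3 ![4, 4, 2]).Walk (V3 3 2 1) (V3 0 0 0) from .cons (by decide) <|
  show (Kd 3 ![4, 4, 2]).Walk (V3 2 0 1) (V3 0 0 0) from .cons (by decide) <|
  show (Kd 3 ![4, 4, 2]).Walk (V3 0 1 1) (V3 0 0 0) from .cons (by decide) <|
  show (Kd 3 ![4, 4, 2]).Walk (V3 2 2 1) (V3 0 0 0) from .cons (by decide) <|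
  show (Kd 3 ![4, 4, 2]).Walk (V3 0 3 1) (V3 0 0 0) from .cons (by decide) <|
  show (Kd 3 ![4, 4, 2]).Walk (V3 0 1 0) (V3 0 0 0) from .cons (by decide) <|
  show (Kd 3 ![4, 4, 2]).Walk (V3 2 0 0) (V3 0 0 0) from .cons (by decide) <|
  show (Kd 3 ![4, 4, 2]).Walk (V3 0 0 1) (V3 0 0 0) from .cons (by decide) <|
  show (Kd 3 ![4, 4, 2]).Walk (V3 2 1 1) (V3 0 0 0) from .cons (by decide) <|
  show (Kd 3 ![4, 4, 2]).Walk (V3 2 3 0) (V3 0 0 0) from .cons (by decide) <|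
  show (Kd 3 ![4, 4, 2]).Walk (V3 0 2 0) (V3 0 0 0) from .cons (by decide) <|
  show (Kd 3 ![4, 4, 2]).Walk (V3 1 0 0) (V3 0 0 0) from .cons (by decide) <|
  show (Kd 3 ![4, 4, 2]).Walk (V3 1 2 1) (V3 0 0 0) from .cons (by decide) <|
  show (Kd 3 ![4, 4, 2]).Walk (V3 3 2 0) (V3 0 0 0) from .cons (by decide) <|
  show (Kd 3 ![4, 4, 2]).Walk (V3 3 0 1) (V3 0 0 0) from .cons (by decide) <|
  show (Kd 3 ![4, 4, 2]).Walk (V3 1 1 1) (V3 0 0 0) from .cons (by decide) <|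
  show (Kd 3 ![4, 4, 2]).Walk (V3 3 1 0) (V3 0 0 0) from .cons (by decide) <|
  show (Kd 3 ![4, 4, 2]).Walk (V3 3 3 1) (V3 0 0 0) from .cons (by decide) <|
  show (Kd 3 ![4, 4, 2]).Walk (V3 1 3 0) (V3 0 0 0) from .cons (by decide) <|
  show (Kd 3 ![4, 4, 2]).Walk (V3 2 1 0) (V3 0 0 0) from .cons (by decide) .nil

end KnightAux

open KnightAux in
/-- K(4,4) has no Hamiltonian cycle, but K(4,4,2) does. -/
theorem K44_not_tourable_K442_tourable :
    (¬ ∃ (v : (i : Fin 2) → Fin (![4, 4] i)) (w : (Kd 2 ![4, 4]).Walk v v),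
        w.IsHamiltonianCycle) ∧
    (∃ (v : (i : Fin 3) → Fin (![4, 4, 2] i)) (w : (Kd 3 ![4, 4, 2]).Walk v v),
        w.IsHamiltonianCycle) := by
  constructor
  · rintro ⟨v, w, hw⟩
    have hcyc := hw.isCycle
    have hsub : ∀ x y, w.toSubgraph.Adj x y → (Kd 2 ![4, 4]).Adj x y :=
      fun x y h => w.toSubgraph.adj_sub h
    have key : ∀ u, ∃ a b, a ≠ b ∧ w.toSubgraph.Adj u a ∧ w.toSubgraph.Adj u b ∧
        ∀ x, w.toSubgraph.Adj u x → x = a ∨ x = b :=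
      fun u => exists_two hcyc (hw.mem_support u)
    have hN00 : ∀ x, (Kd 2 ![4, 4]).Adj (V2 0 0) x → x = V2 1 2 ∨ x = V2 2 1 := by decide
    have hN33 : ∀ x, (Kd 2 ![4, 4]).Adj (V2 3 3) x → x = V2 1 2 ∨ x = V2 2 1 := by decide
    have hne : V2 1 2 ≠ V2 2 1 := by decide
    have hne' : V2 0 0 ≠ V2 3 3 := by decide
    have h00 := force_two (fun x hx => hN00 x (hsub _ _ hx)) hne (key (V2 0 0))
    have h33 := force_two (fun x hx => hN33 x (hsub _ _ hx)) hne (key (V2 3 3))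
    have hP12 : ∀ x, w.toSubgraph.Adj (V2 1 2) x → x = V2 0 0 ∨ x = V2 3 3 := by
      obtain ⟨a, b, hab, -, -, hmax⟩ := key (V2 1 2)
      intro x hx
      exact pair_cases (hmax _ h00.1.symm) (hmax _ h33.1.symm) hne' (hmax x hx)
    have hP21 : ∀ x, w.toSubgraph.Adj (V2 2 1) x → x = V2 0 0 ∨ x = V2 3 3 := by
      obtain ⟨a, b, hab, -, -, hmax⟩ := key (V2 2 1)
      intro x hx
      exact pair_cases (hmax _ h00.2.symm) (hmax _ h33.2.symm) hne' (hmax x hx)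
    set S : Set ((i : Fin 2) → Fin (![4, 4] i)) := {V2 0 0, V2 3 3, V2 1 2, V2 2 1} with hS
    have hclose : ∀ x ∈ S, ∀ y, w.toSubgraph.Adj x y → y ∈ S := by
      intro x hx y hy
      simp only [hS, Set.mem_insert_iff, Set.mem_singleton_iff] at hx ⊢
      rcases hx with rfl | rfl | rfl | rfl
      · rcases hN00 y (hsub _ _ hy) with rfl | rfl <;> tauto
      · rcases hN33 y (hsub _ _ hy) with rfl | rfl <;> tauto
      · rcases hP12 y hy with rfl | rfl <;> tauto
      · rcases hP21 y hy with rfl | rfl <;> tauto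
    have hconn := w.toSubgraph_connected
    have hc00 : V2 0 0 ∈ w.toSubgraph.verts := by
      rw [SimpleGraph.Walk.verts_toSubgraph]; exact hw.mem_support _
    have hq : V2 0 1 ∈ w.toSubgraph.verts := by
      rw [SimpleGraph.Walk.verts_toSubgraph]; exact hw.mem_support _
    obtain ⟨p⟩ := hconn ⟨_, hc00⟩ ⟨_, hq⟩
    have hmem : V2 0 1 ∈ S := mem_of_reach hclose p (by simp [hS])
    simp only [hS, Set.mem_insert_iff, Set.mem_singleton_iff] at hmem
    rcases hmem with h | h | h | h <;> exact absurd h (by decide)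
  · refine ⟨V3 0 0 0, tour, ?_⟩
    rw [SimpleGraph.Walk.isHamiltonianCycle_isCycle_and_isHamiltonian_tail]
    refine ⟨⟨⟨⟨?_⟩, ?_⟩, ?_⟩, ?_⟩
    · decide
    · intro h
      have h' := congrArg SimpleGraph.Walk.length h
      rw [SimpleGraph.Walk.length_nil] at h'
      exact absurd h' (by decide)
    · decide
    · show ∀ a, tour.tail.support.count a = 1
      decide
end

section
/- The 3-dimensional knight's graph K(4,2,2) has no Hamiltonian cycle. -/
lemma adj_parity {a b : (i : Fin 3) → Fin (![4, 2, 2] i)}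
    (h : (Kd 3 ![4, 2, 2]).Adj a b) : (a 0).val % 2 = (b 0).val % 2 := by
  obtain ⟨i, j, hij, h1, h2, h3⟩ := h
  by_cases hj : j = 0
  · subst hj
    have ha := (a 0).isLt
    have hb := (b 0).isLt
    simp only [Nat.dist] at h2
    simp only [Matrix.cons_val_zero] at ha hb
    omega
  · have hle : ∀ j : Fin 3, j ≠ 0 → (![4, 2, 2] : Fin 3 → ℕ) j ≤ 2 := by decide
    have ha := (a j).isLt
    have hb := (b j).isLt
    have := hle j hj
    simp only [Nat.dist] at h2
    omega

lemma walk_parity {u v : (i : Fin 3) → Fin (![4, 2, 2] i)}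
    (p : (Kd 3 ![4, 2, 2]).Walk u v) : (u 0).val % 2 = (v 0).val % 2 := by
  induction p with
  | nil => rfl
  | cons h _ ih => exact (adj_parity h).trans ih

/-- K(4,2,2) has no Hamiltonian cycle. -/
theorem K422_not_tourable :
    ¬ ∃ (v : (i : Fin 3) → Fin (![4, 2, 2] i)) (w : (Kd 3 ![4, 2, 2]).Walk v v),
      w.IsHamiltonianCycle := by
  rintro ⟨v, w, hw⟩
  set x : Fin ((![4, 2, 2] : Fin 3 → ℕ) 0) :=
    ⟨if (v 0).val % 2 = 0 then 1 else 0, by split <;> norm_num⟩ with hx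
  set u := Function.update v 0 x with hu
  have hmem : u ∈ w.support := hw.mem_support u
  have := walk_parity (w.takeUntil u hmem)
  have hu0 : u 0 = x := by simp [hu]; rfl
  rw [hu0, hx] at this
  simp only at this
  split at this <;> omega
end

section
/- The knight's graph K(4,3) (i.e., the 4×3 board) has no Hamiltonian cycle. -/
/-- 2-dimensional knight's graph on the board `[n] × [m]`. -/
def K (n m : ℕ) : SimpleGraph (Fin n × Fin m) where
  Adj u v := (Nat.dist u.1.val v.1.val = 1 ∧ Nat.dist u.2.val v.2.val = 2) ∨
             (Nat.dist u.1.val v.1.val = 2 ∧ Nat.dist u.2.val v.2.val = 1)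
  symm := by
    constructor
    rintro u v (⟨h1, h2⟩ | ⟨h1, h2⟩)
    · exact Or.inl ⟨by rw [Nat.dist_comm]; exact h1, by rw [Nat.dist_comm]; exact h2⟩
    · exact Or.inr ⟨by rw [Nat.dist_comm]; exact h1, by rw [Nat.dist_comm]; exact h2⟩
  loopless := by
    constructor
    rintro u (⟨h1, _⟩ | ⟨h1, _⟩) <;> simp [Nat.dist_self] at h1

instance : DecidableRel (K 4 3).Adj := fun u v =>
  decidable_of_iff ((Nat.dist u.1.val v.1.val = 1 ∧ Nat.dist u.2.val v.2.val = 2) ∨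
             (Nat.dist u.1.val v.1.val = 2 ∧ Nat.dist u.2.val v.2.val = 1)) Iff.rfl

lemma support_getElem {V : Type*} {G : SimpleGraph V} :
    ∀ {u v : V} (p : G.Walk u v) (n : ℕ) (h : n < p.support.length),
      p.support[n] = p.getVert n := by
  intro u v p
  induction p with
  | nil =>
      intro n h
      obtain rfl : n = 0 := by simpa [SimpleGraph.Walk.support_nil] using h
      rfl
  | cons h q ih =>
      intro n hn
      cases n with
      | zero => simp
      | succ n =>
          simp only [SimpleGraph.Walk.support_cons, List.getElem_cons_succ,
            SimpleGraph.Walk.getVert_cons_succ]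
          exact ih n (by simpa [SimpleGraph.Walk.support_cons] using hn)


lemma chain6 (f : ℕ → Fin 4 × Fin 3)
    (hadj : ∀ i, (K 4 3).Adj (f i) (f (i+1)))
    (hinj : ∀ i j, f i = f j → i % 12 = j % 12)
    (hmod : ∀ i j, i % 12 = j % 12 → f i = f j)
    (hsurj : ∀ u, ∃ i, f i = u)
    (a b c d e g : Fin 4 × Fin 3)
    (hbd : b ≠ d) (hgd : g ≠ d)
    (_Na : ∀ x, (K 4 3).Adj a x → x = b ∨ x = g)
    (Nb : ∀ x, (K 4 3).Adj b x → x = a ∨ x = c)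
    (Nd : ∀ x, (K 4 3).Adj d x → x = c ∨ x = e)
    (Ng : ∀ x, (K 4 3).Adj g x → x = a ∨ x = e)
    (k : ℕ) (hk : f k = a) (h1 : f (k+1) = b) : False := by
  -- Step 2 : f (k+2) = c
  have h2 : f (k+2) = c := by
    have := Nb _ (h1 ▸ hadj (k+1))
    rcases this with h | h
    · exact absurd (hinj _ _ (h.trans hk.symm)) (by omega)
    · exact h
  -- Step 3 : f (k+3) = d
  have h3 : f (k+3) = d := by
    obtain ⟨m, hm⟩ := hsurj d
    have hx1 : f (m+1) = c ∨ f (m+1) = e := Nd _ (hm ▸ hadj m)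
    have hx2 : f (m+11) = c ∨ f (m+11) = e := by
      have hmm : f (m+12) = f m := hmod _ _ (by omega)
      have := hadj (m+11)
      rw [show m+11+1 = m+12 from rfl, hmm, hm] at this
      exact Nd _ this.symm
    have hne : f (m+1) ≠ f (m+11) := fun h => by
      have := hinj _ _ h; omega
    have hc : f (m+1) = c ∨ f (m+11) = c := by
      rcases hx1 with h | h
      · exact Or.inl h
      · rcases hx2 with h' | h'
        · exact Or.inr h'
        · exact absurd (h.trans h'.symm) hne
    rcases hc with h | h
    · -- m+1 ≡ k+2, so m ≡ k+1, so d = b, contradiction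
      have := hinj _ _ (h.trans h2.symm)
      have : f m = f (k+1) := hmod _ _ (by omega)
      exact absurd (h1 ▸ this ▸ hm : (b : Fin 4 × Fin 3) = d).symm hbd.symm
    · have := hinj _ _ (h.trans h2.symm)
      have hkm : f (k+3) = f m := hmod _ _ (by omega)
      exact hkm.trans hm
  -- Step 4 : f (k+4) = e
  have h4 : f (k+4) = e := by
    have := Nd _ (h3 ▸ hadj (k+3))
    rcases this with h | h
    · exact absurd (hinj _ _ (h.trans h2.symm)) (by omega)
    · exact h
  -- Step 5 : f (k+5) = g
  have h5 : f (k+5) = g := by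
    obtain ⟨p, hp⟩ := hsurj g
    have hy1 : f (p+1) = a ∨ f (p+1) = e := Ng _ (hp ▸ hadj p)
    have hy2 : f (p+11) = a ∨ f (p+11) = e := by
      have hpp : f (p+12) = f p := hmod _ _ (by omega)
      have := hadj (p+11)
      rw [show p+11+1 = p+12 from rfl, hpp, hp] at this
      exact Ng _ this.symm
    have hne : f (p+1) ≠ f (p+11) := fun h => by
      have := hinj _ _ h; omega
    have he : f (p+1) = e ∨ f (p+11) = e := by
      rcases hy1 with h | h
      · rcases hy2 with h' | h'
        · exact absurd (h.trans h'.symm) hne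
        · exact Or.inr h'
      · exact Or.inl h
    rcases he with h | h
    · have := hinj _ _ (h.trans h4.symm)
      have : f p = f (k+3) := hmod _ _ (by omega)
      exact absurd (h3 ▸ this ▸ hp : (d : Fin 4 × Fin 3) = g).symm hgd
    · have := hinj _ _ (h.trans h4.symm)
      have hkp : f (k+5) = f p := hmod _ _ (by omega)
      exact hkp.trans hp
  -- Step 6 : contradiction
  have := Ng _ (h5 ▸ hadj (k+5))
  rcases this with h | h
  · exact absurd (hinj _ _ (h.trans hk.symm)) (by omega)
  · exact absurd (hinj _ _ (h.trans h4.symm)) (by omega)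


/-- K(4,3) has no Hamiltonian cycle. -/
theorem K43_not_tourable :
    ¬ ∃ (v : Fin 4 × Fin 3) (w : (K 4 3).Walk v v), w.IsHamiltonianCycle := by
  rintro ⟨v, w, hw⟩
  have hlen : w.length = 12 := by simpa using hw.length_eq
  have hsupl : w.support.length = 13 := by
    rw [SimpleGraph.Walk.length_support, hlen]
  -- getVert is injective on [0, 12)
  have key : ∀ i j, i < 12 → j < 12 → w.getVert i = w.getVert j → i = j := by
    have hnd : w.support.tail.Nodup := hw.isCycle.support_nodup
    have htl : w.support.tail.length = 12 := by
      rw [List.length_tail, hsupl]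
    have hrep : ∀ i, i < 12 → w.getVert i = w.support.tail[(i + 11) % 12]'(by omega) := by
      intro i hi
      have h1 : w.support.tail[(i + 11) % 12]'(by omega) =
          w.support[(i + 11) % 12 + 1]'(by omega) := by
        rw [List.getElem_tail]
      rw [h1, support_getElem]
      rcases Nat.eq_zero_or_pos i with rfl | hpos
      · have : (0 + 11) % 12 + 1 = 12 := by norm_num
        rw [this, SimpleGraph.Walk.getVert_zero, ← hlen, SimpleGraph.Walk.getVert_length]
      · congr 1
        omega
    intro i j hi hj hij
    rw [hrep i hi, hrep j hj] at hij
    have := (List.Nodup.getElem_inj_iff hnd).mp hij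
    omega
  set f : ℕ → Fin 4 × Fin 3 := fun i => w.getVert (i % 12) with hf
  have hmod : ∀ i j, i % 12 = j % 12 → f i = f j := by
    intro i j h; simp only [hf, h]
  have hinj : ∀ i j, f i = f j → i % 12 = j % 12 := by
    intro i j h
    exact key _ _ (Nat.mod_lt _ (by norm_num)) (Nat.mod_lt _ (by norm_num)) h
  have hadj : ∀ i, (K 4 3).Adj (f i) (f (i+1)) := by
    intro i
    rcases Nat.lt_or_ge (i % 12) 11 with h | h
    · have h1 : (i+1) % 12 = i % 12 + 1 := by omega
      simp only [hf, h1]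
      exact w.adj_getVert_succ (by omega)
    · have h11 : i % 12 = 11 := by omega
      have h1 : (i+1) % 12 = 0 := by omega
      simp only [hf, h11, h1, SimpleGraph.Walk.getVert_zero]
      have := w.adj_getVert_succ (i := 11) (by omega)
      rwa [show (11:ℕ)+1 = 12 from rfl, ← hlen, SimpleGraph.Walk.getVert_length] at this
  have hsurj : ∀ u, ∃ i, f i = u := by
    intro u
    obtain ⟨n, hn, hn12⟩ := SimpleGraph.Walk.mem_support_iff_exists_getVert.mp
      (hw.mem_support u)
    rcases Nat.lt_or_ge n 12 with h | h
    · exact ⟨n, by simp only [hf, Nat.mod_eq_of_lt h]; exact hn⟩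
    · refine ⟨0, ?_⟩
      have : n = 12 := by omega
      subst this
      simp only [hf, Nat.zero_mod, SimpleGraph.Walk.getVert_zero]
      rw [← hn, ← hlen, SimpleGraph.Walk.getVert_length]
  -- the six trapped vertices
  obtain ⟨k, hk⟩ := hsurj ((1 : Fin 4), (1 : Fin 3))
  have hstep : f (k+1) = ((3 : Fin 4), (0 : Fin 3)) ∨ f (k+1) = ((3 : Fin 4), (2 : Fin 3)) := by
    have : (K 4 3).Adj ((1 : Fin 4), (1 : Fin 3)) (f (k+1)) := hk ▸ hadj k
    revert this
    generalize f (k+1) = x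
    revert x; decide
  rcases hstep with h1 | h1
  · exact chain6 f hadj hinj hmod hsurj
      ((1 : Fin 4), (1 : Fin 3)) ((3 : Fin 4), (0 : Fin 3)) ((2 : Fin 4), (2 : Fin 3))
      ((0 : Fin 4), (1 : Fin 3)) ((2 : Fin 4), (0 : Fin 3)) ((3 : Fin 4), (2 : Fin 3))
      (by decide) (by decide)
      (by decide) (by decide) (by decide) (by decide) k hk h1
  · exact chain6 f hadj hinj hmod hsurj
      ((1 : Fin 4), (1 : Fin 3)) ((3 : Fin 4), (2 : Fin 3)) ((2 : Fin 4), (0 : Fin 3))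
      ((0 : Fin 4), (1 : Fin 3)) ((2 : Fin 4), (2 : Fin 3)) ((3 : Fin 4), (0 : Fin 3))
      (by decide) (by decide)
      (by decide) (by decide) (by decide) (by decide) k hk h1
end

section
/- If the knight's graph K(n_1,…,n_d) has a Hamiltonian cycle containing two edge-disjoint sites, then for every p ≥ 1 the knight's graph K(n_1,…,n_d,p) has a Hamiltonian cycle containing two edge-disjoint sites. -/
/-- Two points of the board agreeing in all coordinates except one, in which
they differ by exactly 2. -/
def TwoApart {d : ℕ} {n : Fin d → ℕ} (u v : (i : Fin d) → Fin (n i)) : Prop :=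
  ∃ j, Nat.dist (u j).val (v j).val = 2 ∧ ∀ k, k ≠ j → u k = v k

/-- A site of a closed walk: two distinct edges of the walk whose corresponding
endpoints are two apart. -/
def IsSite {d : ℕ} {n : Fin d → ℕ} {v : (i : Fin d) → Fin (n i)}
    (w : (Kd d n).Walk v v) (a₁ a₂ c₁ c₂ : (i : Fin d) → Fin (n i)) : Prop :=
  s(a₁, a₂) ∈ w.edges ∧ s(c₁, c₂) ∈ w.edges ∧ s(a₁, a₂) ≠ s(c₁, c₂) ∧
    TwoApart a₁ c₁ ∧ TwoApart a₂ c₂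

/-- The knights graph has a Hamiltonian cycle containing two edge-disjoint sites. -/
def HasBiSitedTour (d : ℕ) (n : Fin d → ℕ) : Prop :=
  ∃ (v : (i : Fin d) → Fin (n i)) (w : (Kd d n).Walk v v),
    w.IsHamiltonianCycle ∧
    ∃ a₁ a₂ c₁ c₂ b₁ b₂ e₁ e₂,
      IsSite w a₁ a₂ c₁ c₂ ∧ IsSite w b₁ b₂ e₁ e₂ ∧
      ({s(a₁, a₂), s(c₁, c₂)} ∩ {s(b₁, b₂), s(e₁, e₂)} :
        Set (Sym2 ((i : Fin d) → Fin (n i)))) = ∅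

/-! ### Auxiliary general lemmas about cutting a cycle at an edge -/

open SimpleGraph

section CutLemmas
variable {V : Type*} {G : SimpleGraph V}

lemma mem_support_of_mem_edges' {u v : V} (p : G.Walk u v) {e : Sym2 V} (he : e ∈ p.edges)
    {z : V} (hz : z ∈ e) : z ∈ p.support := by
  induction e using Sym2.ind with
  | _ a b =>
    rcases Sym2.mem_iff.mp hz with rfl | rfl
    · exact p.fst_mem_support_of_mem_edges he
    · exact p.snd_mem_support_of_mem_edges he

lemma path_cut_start {x y b : V} (Q : G.Walk x b) (hQ : Q.IsPath) (he : s(x, y) ∈ Q.edges) :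
    ∃ (h' : G.Adj x y) (q : G.Walk y b), Q = Walk.cons h' q := by
  cases Q with
  | nil => simp at he
  | @cons _ c _ h q =>
    rw [Walk.edges_cons, List.mem_cons] at he
    rw [Walk.cons_isPath_iff] at hQ
    rcases he with he | he
    · have hxc : x ≠ c := G.ne_of_adj h
      rw [Sym2.eq_iff] at he
      rcases he with ⟨-, rfl⟩ | ⟨h1, -⟩
      · exact ⟨h, q, rfl⟩
      · exact absurd h1 hxc
    · exact absurd (q.fst_mem_support_of_mem_edges he) hQ.2

lemma end_mem_support_tail {v : V} (W : G.Walk v v) (h : W ≠ Walk.nil) :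
    v ∈ W.support.tail := by
  cases W with
  | nil => exact absurd rfl h
  | cons h q => simpa using q.end_mem_support

lemma cycle_cut_aux {x y : V} (D : G.Walk x x) (hD : D.IsCycle) (he : s(x, y) ∈ D.edges) :
    ∃ P : G.Walk x y, P.IsPath ∧ (∀ z, z ∈ P.support ↔ z ∈ D.support) ∧
      ∀ e, e ∈ P.edges ↔ e ∈ D.edges ∧ e ≠ s(x, y) := by
  have hxy : x ≠ y := G.ne_of_adj (D.adj_of_mem_edges he)
  cases D with
  | nil => simp at he
  | @cons _ b _ h rest =>
    rw [Walk.cons_isCycle_iff] at hD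
    obtain ⟨hrest, hnb⟩ := hD
    rw [Walk.edges_cons, List.mem_cons] at he
    by_cases hby : s(x, y) = s(x, b)
    · have hbley : b = y := by
        rw [Sym2.eq_iff] at hby
        rcases hby with ⟨-, h1⟩ | ⟨-, h2⟩
        · exact h1.symm
        · exact absurd h2.symm hxy
      subst hbley
      refine ⟨rest.reverse, hrest.reverse, ?_, ?_⟩
      · intro z
        rw [Walk.support_reverse, List.mem_reverse, Walk.support_cons, List.mem_cons]
        constructor
        · exact fun hz => Or.inr hz
        · rintro (rfl | hz)
          · exact rest.end_mem_support
          · exact hz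
      · intro e
        rw [Walk.edges_reverse, List.mem_reverse, Walk.edges_cons, List.mem_cons]
        constructor
        · intro hz
          refine ⟨Or.inr hz, fun h' => hnb ?_⟩
          rw [← hby, ← h']; exact hz
        · rintro ⟨(rfl | hz), hne⟩
          · exact absurd hby.symm hne
          · exact hz
    · have he' : s(x, y) ∈ rest.edges := by
        rcases he with he | he
        · exact absurd he hby
        · exact he
      have he'' : s(x, y) ∈ rest.reverse.edges := by
        rwa [Walk.edges_reverse, List.mem_reverse]
      obtain ⟨h', q, hq⟩ := path_cut_start rest.reverse hrest.reverse he''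
      have hQpath : (Walk.cons h' q).IsPath := hq ▸ hrest.reverse
      rw [Walk.cons_isPath_iff] at hQpath
      obtain ⟨hqpath, hxq⟩ := hQpath
      have hrest_eq : rest = (Walk.cons h' q).reverse := by
        rw [← hq, Walk.reverse_reverse]
      refine ⟨Walk.cons h q.reverse, ?_, ?_, ?_⟩
      · rw [Walk.cons_isPath_iff]
        refine ⟨hqpath.reverse, ?_⟩
        rwa [Walk.support_reverse, List.mem_reverse]
      · intro z
        simp only [Walk.support_cons, List.mem_cons, Walk.support_reverse, List.mem_reverse,
          hrest_eq]
        tauto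
      · intro e
        have hnotq : s(x, y) ∉ q.edges := by
          have := (hq ▸ hrest.reverse).edges_nodup
          rw [Walk.edges_cons, List.nodup_cons] at this
          exact this.1
        simp only [Walk.edges_cons, List.mem_cons, Walk.edges_reverse, List.mem_reverse,
          hrest_eq]
        constructor
        · rintro (rfl | hz)
          · exact ⟨Or.inl rfl, fun h'' => hby h''.symm⟩
          · exact ⟨Or.inr (Or.inr hz), fun h'' => hnotq (h'' ▸ hz)⟩
        · rintro ⟨(rfl | (rfl | hz)), hne⟩
          · exact Or.inl rfl
          · exact absurd rfl hne
          · exact Or.inr hz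

lemma cycle_cut [DecidableEq V] {v x y : V} (C : G.Walk v v) (hC : C.IsCycle)
    (he : s(x, y) ∈ C.edges) :
    ∃ P : G.Walk x y, P.IsPath ∧ (∀ z, z ∈ P.support ↔ z ∈ C.support) ∧
      ∀ e, e ∈ P.edges ↔ e ∈ C.edges ∧ e ≠ s(x, y) := by
  have hx : x ∈ C.support := C.fst_mem_support_of_mem_edges he
  have hD : (C.rotate x hx).IsCycle := hC.rotate hx
  have heD : s(x, y) ∈ (C.rotate x hx).edges := (C.rotate_edges x hx).mem_iff.mpr he
  have hsup : ∀ z, z ∈ (C.rotate x hx).support ↔ z ∈ C.support := by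
    intro z
    have h1 : z ∈ (C.rotate x hx).support ↔ z ∈ (C.rotate x hx).support.tail := by
      constructor
      · intro hz
        rcases List.mem_cons.mp ((C.rotate x hx).support_eq_cons ▸ hz) with rfl | hz'
        · exact end_mem_support_tail _ hD.ne_nil
        · exact hz'
      · exact List.mem_of_mem_tail
    have h2 : z ∈ C.support ↔ z ∈ C.support.tail := by
      constructor
      · intro hz
        rcases List.mem_cons.mp (C.support_eq_cons ▸ hz) with rfl | hz'
        · exact end_mem_support_tail _ hC.ne_nil
        · exact hz'
      · exact List.mem_of_mem_tail
    rw [h1, h2, (C.support_rotate x hx).mem_iff]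
  obtain ⟨P, hP, hPs, hPe⟩ := cycle_cut_aux (C.rotate x hx) hD heD
  refine ⟨P, hP, fun z => (hPs z).trans (hsup z), fun e => (hPe e).trans ?_⟩
  rw [(C.rotate_edges x hx).mem_iff]

end CutLemmas

/-! ### The layer embedding -/

section Emb
variable {d : ℕ}

def layEmb (n : Fin d → ℕ) (p : ℕ) (ℓ : Fin p) (x : (i : Fin d) → Fin (n i)) :
    (i : Fin (d + 1)) → Fin ((Fin.snoc n p : Fin (d + 1) → ℕ) i) :=
  Fin.snoc (fun i => Fin.cast (by simp) (x i)) (Fin.cast (by simp) ℓ)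

@[simp] lemma layEmb_castSucc (n : Fin d → ℕ) {p : ℕ} (ℓ : Fin p) (x) (i : Fin d) :
    ((layEmb n p ℓ x) i.castSucc).val = (x i).val := by
  simp [layEmb]

@[simp] lemma layEmb_last (n : Fin d → ℕ) {p : ℕ} (ℓ : Fin p) (x) :
    ((layEmb n p ℓ x) (Fin.last d)).val = ℓ.val := by
  simp [layEmb]

lemma layEmb_inj {n : Fin d → ℕ} {p : ℕ} {ℓ ℓ' : Fin p} {x y}
    (h : layEmb n p ℓ x = layEmb n p ℓ' y) : ℓ = ℓ' ∧ x = y := by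
  constructor
  · apply Fin.val_injective
    rw [← layEmb_last n ℓ x, ← layEmb_last n ℓ' y, h]
  · funext i
    apply Fin.val_injective
    rw [← layEmb_castSucc n ℓ x i, ← layEmb_castSucc n ℓ' y i, h]

lemma layEmb_surj {n : Fin d → ℕ} {p : ℕ}
    (z : (i : Fin (d + 1)) → Fin ((Fin.snoc n p : Fin (d + 1) → ℕ) i))
    (ℓ : Fin p) (hz : (z (Fin.last d)).val = ℓ.val) : ∃ x, z = layEmb n p ℓ x := by
  refine ⟨fun i => Fin.cast (by simp) (z i.castSucc), ?_⟩
  funext i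
  apply Fin.val_injective
  induction i using Fin.lastCases with
  | last => rw [layEmb_last]; exact hz
  | cast i => rw [layEmb_castSucc]; simp

lemma layEmb_layer_lt {n : Fin d → ℕ} {p : ℕ}
    (z : (i : Fin (d + 1)) → Fin ((Fin.snoc n p : Fin (d + 1) → ℕ) i)) :
    (z (Fin.last d)).val < p := by
  have := (z (Fin.last d)).isLt
  simpa using this

lemma layEmb_adj {n : Fin d → ℕ} {p : ℕ} (ℓ : Fin p) {x y} (h : (Kd d n).Adj x y) :
    (Kd (d + 1) (Fin.snoc n p)).Adj (layEmb n p ℓ x) (layEmb n p ℓ y) := by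
  obtain ⟨i, j, hij, h1, h2, h3⟩ := h
  refine ⟨i.castSucc, j.castSucc, by simpa using hij, ?_, ?_, ?_⟩
  · rw [layEmb_castSucc, layEmb_castSucc]; exact h1
  · rw [layEmb_castSucc, layEmb_castSucc]; exact h2
  · intro k hki hkj
    induction k using Fin.lastCases with
    | last => apply Fin.val_injective; rw [layEmb_last, layEmb_last]
    | cast k =>
      apply Fin.val_injective
      rw [layEmb_castSucc, layEmb_castSucc]
      exact congrArg Fin.val (h3 k (fun hh => hki (congrArg Fin.castSucc hh))
        (fun hh => hkj (congrArg Fin.castSucc hh)))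

lemma layEmb_adj_vert {n : Fin d → ℕ} {p : ℕ} {ℓ ℓ' : Fin p}
    (hd : Nat.dist ℓ.val ℓ'.val = 1) {x y} (h : TwoApart x y) :
    (Kd (d + 1) (Fin.snoc n p)).Adj (layEmb n p ℓ x) (layEmb n p ℓ' y) := by
  obtain ⟨j, h2, h3⟩ := h
  refine ⟨Fin.last d, j.castSucc, (Fin.castSucc_lt_last j).ne', ?_, ?_, ?_⟩
  · rw [layEmb_last, layEmb_last]; exact hd
  · rw [layEmb_castSucc, layEmb_castSucc]; exact h2
  · intro k hk1 hk2
    induction k using Fin.lastCases with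
    | last => exact absurd rfl hk1
    | cast k =>
      apply Fin.val_injective
      rw [layEmb_castSucc, layEmb_castSucc]
      exact congrArg Fin.val (h3 k (fun hh => hk2 (congrArg Fin.castSucc hh)))

lemma layEmb_twoApart {n : Fin d → ℕ} {p : ℕ} {ℓ : Fin p} {x y} (h : TwoApart x y) :
    TwoApart (layEmb n p ℓ x) (layEmb n p ℓ y) := by
  obtain ⟨j, h2, h3⟩ := h
  refine ⟨j.castSucc, ?_, ?_⟩
  · rw [layEmb_castSucc, layEmb_castSucc]; exact h2
  · intro k hk
    induction k using Fin.lastCases with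
    | last => apply Fin.val_injective; rw [layEmb_last, layEmb_last]
    | cast k =>
      apply Fin.val_injective
      rw [layEmb_castSucc, layEmb_castSucc]
      exact congrArg Fin.val (h3 k (fun hh => hk (congrArg Fin.castSucc hh)))

lemma layEmb_ne {n : Fin d → ℕ} {p : ℕ} {ℓ ℓ' : Fin p} (h : ℓ.val ≠ ℓ'.val) (x y) :
    layEmb n p ℓ x ≠ layEmb n p ℓ' y :=
  fun he => h ((layEmb_inj he).1 ▸ rfl)

lemma layEmb_sym2_ne {n : Fin d → ℕ} {p : ℕ} {ℓ ℓ' : Fin p} (h : ℓ.val ≠ ℓ'.val) (x y x' y') :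
    s(layEmb n p ℓ x, layEmb n p ℓ y) ≠ s(layEmb n p ℓ' x', layEmb n p ℓ' y') := by
  intro he
  rw [Sym2.eq_iff] at he
  rcases he with ⟨h1, -⟩ | ⟨h1, -⟩ <;> exact layEmb_ne h _ _ h1

lemma layEmb_sym2_inj {n : Fin d → ℕ} {p : ℕ} {ℓ : Fin p} {x y x' y'}
    (h : s(layEmb n p ℓ x, layEmb n p ℓ y) = s(layEmb n p ℓ x', layEmb n p ℓ y')) :
    s(x, y) = s(x', y') := by
  rw [Sym2.eq_iff] at h ⊢
  rcases h with ⟨h1, h2⟩ | ⟨h1, h2⟩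
  · exact Or.inl ⟨(layEmb_inj h1).2, (layEmb_inj h2).2⟩
  · exact Or.inr ⟨(layEmb_inj h1).2, (layEmb_inj h2).2⟩

def layHom (n : Fin d → ℕ) (p : ℕ) (ℓ : Fin p) : Kd d n →g Kd (d + 1) (Fin.snoc n p) :=
  ⟨layEmb n p ℓ, fun h => layEmb_adj ℓ h⟩

end Emb

/-- If K(n₁,…,n_d) has a bi-sited Hamiltonian cycle then so does
K(n₁,…,n_d,p) for every p ≥ 1. -/
theorem biSited_extends (d : ℕ) (n : Fin d → ℕ) (h : HasBiSitedTour d n)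
    (p : ℕ) (hp : 1 ≤ p) :
    HasBiSitedTour (d + 1) (Fin.snoc n p) := by
  classical
  obtain ⟨v, w, hw, a₁, a₂, c₁, c₂, b₁, b₂, e₁, e₂,
    ⟨hA, hC, hAC, hta1, hta2⟩, ⟨hB, hE, hBE, htb1, htb2⟩, hdisj⟩ := h
  have hdis : ∀ u ∈ ({s(a₁, a₂), s(c₁, c₂)} : Set (Sym2 _)),
      u ≠ s(b₁, b₂) ∧ u ≠ s(e₁, e₂) := by
    intro u hu
    constructor <;> intro h' <;>
      exact Set.eq_empty_iff_forall_notMem.mp hdisj u ⟨hu, by simp [h']⟩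
  have hABne : s(a₁, a₂) ≠ s(b₁, b₂) := (hdis _ (by simp)).1
  have hAEne : s(a₁, a₂) ≠ s(e₁, e₂) := (hdis _ (by simp)).2
  have hCBne : s(c₁, c₂) ≠ s(b₁, b₂) := (hdis _ (by simp)).1
  have hCEne : s(c₁, c₂) ≠ s(e₁, e₂) := (hdis _ (by simp)).2
  have haa : (Kd d n).Adj a₁ a₂ := w.adj_of_mem_edges hA
  have hf_inj : ∀ ℓ : Fin p, Function.Injective (layEmb n p ℓ) :=
    fun ℓ x y hxy => (layEmb_inj hxy).2
  have hDcyc : ∀ ℓ : Fin p, (w.map (layHom n p ℓ)).IsCycle :=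
    fun ℓ => hw.isCycle.map (hf_inj ℓ)
  have hDedge : ∀ (ℓ : Fin p) x y, s(x, y) ∈ w.edges →
      s(layEmb n p ℓ x, layEmb n p ℓ y) ∈ (w.map (layHom n p ℓ)).edges := by
    intro ℓ x y hxy
    rw [Walk.edges_map]
    have := List.mem_map_of_mem (f := Sym2.map (layHom n p ℓ)) hxy
    rwa [Sym2.map_pair_eq] at this
  have hDsup : ∀ (ℓ : Fin p) z,
      z ∈ (w.map (layHom n p ℓ)).support ↔ (z (Fin.last d)).val = ℓ.val := by
    intro ℓ z
    rw [Walk.support_map]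
    constructor
    · intro hz
      obtain ⟨x, -, rfl⟩ := List.mem_map.mp hz
      exact layEmb_last n ℓ x
    · intro hz
      obtain ⟨x, rfl⟩ := layEmb_surj z ℓ hz
      exact List.mem_map_of_mem (f := layHom n p ℓ) (hw.mem_support x)
  have key : ∀ m : ℕ, ∀ hm : m < p,
      ∃ P : (Kd (d + 1) (Fin.snoc n p)).Walk (layEmb n p ⟨m, hm⟩ a₁) (layEmb n p ⟨m, hm⟩ a₂),
        P.IsPath ∧ (∀ z, z ∈ P.support ↔ (z (Fin.last d)).val ≤ m) ∧
        s(layEmb n p ⟨m, hm⟩ a₁, layEmb n p ⟨m, hm⟩ a₂) ∉ P.edges ∧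
        s(layEmb n p ⟨0, hp⟩ b₁, layEmb n p ⟨0, hp⟩ b₂) ∈ P.edges ∧
        s(layEmb n p ⟨0, hp⟩ e₁, layEmb n p ⟨0, hp⟩ e₂) ∈ P.edges ∧
        s(layEmb n p ⟨m, hm⟩ b₁, layEmb n p ⟨m, hm⟩ b₂) ∈ P.edges ∧
        s(layEmb n p ⟨m, hm⟩ e₁, layEmb n p ⟨m, hm⟩ e₂) ∈ P.edges ∧
        (m = 0 → s(layEmb n p ⟨0, hp⟩ c₁, layEmb n p ⟨0, hp⟩ c₂) ∈ P.edges) := by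
    intro m
    induction m with
    | zero =>
      intro hm
      obtain ⟨P, hP, hPsup, hPed⟩ :=
        cycle_cut (w.map (layHom n p ⟨0, hm⟩)) (hDcyc _) (hDedge _ a₁ a₂ hA)
      refine ⟨P, hP, ?_, ?_, ?_, ?_, ?_, ?_, ?_⟩
      · intro z
        rw [hPsup z, hDsup]
        simp [Nat.le_zero]
      · exact fun hmem => ((hPed _).mp hmem).2 rfl
      · exact (hPed _).mpr ⟨hDedge _ b₁ b₂ hB, fun h' => hABne (layEmb_sym2_inj h').symm⟩
      · exact (hPed _).mpr ⟨hDedge _ e₁ e₂ hE, fun h' => hAEne (layEmb_sym2_inj h').symm⟩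
      · exact (hPed _).mpr ⟨hDedge _ b₁ b₂ hB, fun h' => hABne (layEmb_sym2_inj h').symm⟩
      · exact (hPed _).mpr ⟨hDedge _ e₁ e₂ hE, fun h' => hAEne (layEmb_sym2_inj h').symm⟩
      · exact fun _ =>
          (hPed _).mpr ⟨hDedge _ c₁ c₂ hC, fun h' => hAC (layEmb_sym2_inj h').symm⟩
    | succ k ih =>
      intro hm
      have hk : k < p := Nat.lt_of_succ_lt hm
      have hv1 : ((⟨k, hk⟩ : Fin p) : ℕ) = k := rfl
      have hv2 : ((⟨k + 1, hm⟩ : Fin p) : ℕ) = k + 1 := rfl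
      obtain ⟨P, hP, hPsup, hPAn, hPB0, hPE0, hPBk, hPEk, -⟩ := ih hk
      obtain ⟨Q, hQ, hQsup, hQed⟩ :=
        cycle_cut (w.map (layHom n p ⟨k + 1, hm⟩)) (hDcyc _) (hDedge _ c₁ c₂ hC)
      have hQsup' : ∀ z, z ∈ Q.support ↔ (z (Fin.last d)).val = k + 1 := by
        intro z
        rw [hQsup z, hDsup]
      have hPlayer : ∀ e ∈ P.edges, ∀ z ∈ e, (z (Fin.last d)).val ≤ k :=
        fun e he z hz => (hPsup z).mp (mem_support_of_mem_edges' P he hz)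
      have hQlayer : ∀ e ∈ Q.edges, ∀ z ∈ e, (z (Fin.last d)).val = k + 1 :=
        fun e he z hz => (hQsup' z).mp (mem_support_of_mem_edges' Q he hz)
      have hdist : Nat.dist (⟨k, hk⟩ : Fin p).val (⟨k + 1, hm⟩ : Fin p).val = 1 := by
        simp [Nat.dist]
      have h₁ : (Kd (d + 1) (Fin.snoc n p)).Adj (layEmb n p ⟨k, hk⟩ a₁)
          (layEmb n p ⟨k + 1, hm⟩ c₁) := layEmb_adj_vert hdist hta1
      have h₂ : (Kd (d + 1) (Fin.snoc n p)).Adj (layEmb n p ⟨k + 1, hm⟩ c₂)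
          (layEmb n p ⟨k, hk⟩ a₂) := (layEmb_adj_vert hdist hta2).symm
      set C' := Q.append (Walk.cons h₂ (P.reverse.append (Walk.cons h₁ Walk.nil))) with hC'def
      have hC'edges : ∀ e, e ∈ C'.edges ↔ e ∈ Q.edges ∨
          e = s(layEmb n p ⟨k + 1, hm⟩ c₂, layEmb n p ⟨k, hk⟩ a₂) ∨
          e ∈ P.edges ∨
          e = s(layEmb n p ⟨k, hk⟩ a₁, layEmb n p ⟨k + 1, hm⟩ c₁) := by
        intro e
        rw [hC'def]
        simp only [Walk.edges_append, Walk.edges_cons, Walk.edges_nil, Walk.edges_reverse,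
          List.mem_append, List.mem_cons, List.mem_reverse, List.not_mem_nil, or_false]
      have hc2nQ : s(layEmb n p ⟨k + 1, hm⟩ c₂, layEmb n p ⟨k, hk⟩ a₂) ∉ Q.edges := by
        intro hmem
        have := hQlayer _ hmem (layEmb n p ⟨k, hk⟩ a₂) (Sym2.mem_iff.mpr (Or.inr rfl))
        rw [layEmb_last, hv1] at this
        omega
      have hc2nP : s(layEmb n p ⟨k + 1, hm⟩ c₂, layEmb n p ⟨k, hk⟩ a₂) ∉ P.edges := by
        intro hmem
        have := hPlayer _ hmem (layEmb n p ⟨k + 1, hm⟩ c₂) (Sym2.mem_iff.mpr (Or.inl rfl))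
        rw [layEmb_last, hv2] at this
        omega
      have ha1nP : s(layEmb n p ⟨k, hk⟩ a₁, layEmb n p ⟨k + 1, hm⟩ c₁) ∉ P.edges := by
        intro hmem
        have := hPlayer _ hmem (layEmb n p ⟨k + 1, hm⟩ c₁) (Sym2.mem_iff.mpr (Or.inr rfl))
        rw [layEmb_last, hv2] at this
        omega
      have ha1nQ : s(layEmb n p ⟨k, hk⟩ a₁, layEmb n p ⟨k + 1, hm⟩ c₁) ∉ Q.edges := by
        intro hmem
        have := hQlayer _ hmem (layEmb n p ⟨k, hk⟩ a₁) (Sym2.mem_iff.mpr (Or.inl rfl))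
        rw [layEmb_last, hv1] at this
        omega
      have hQPdisj : ∀ e ∈ Q.edges, e ∉ P.edges := by
        intro e heQ heP
        have h1 := hQlayer e heQ e.out.1 (Sym2.out_fst_mem e)
        have h2 := hPlayer e heP e.out.1 (Sym2.out_fst_mem e)
        omega
      have hconn_ne : s(layEmb n p ⟨k + 1, hm⟩ c₂, layEmb n p ⟨k, hk⟩ a₂) ≠
          s(layEmb n p ⟨k, hk⟩ a₁, layEmb n p ⟨k + 1, hm⟩ c₁) := by
        intro hmem
        rw [Sym2.eq_iff] at hmem
        rcases hmem with ⟨h1, -⟩ | ⟨-, h2⟩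
        · exact layEmb_ne (by simp) _ _ h1
        · exact haa.ne' ((layEmb_inj h2).2)
      have hC'trail : C'.IsTrail := by
        rw [Walk.isTrail_def, hC'def]
        simp only [Walk.edges_append, Walk.edges_cons, Walk.edges_nil, Walk.edges_reverse]
        rw [List.nodup_append]
        refine ⟨hQ.edges_nodup, ?_, ?_⟩
        · rw [List.nodup_cons]
          constructor
          · simp only [List.mem_append, List.mem_reverse, List.mem_singleton]
            rintro (hmem | heq)
            · exact hc2nP hmem
            · exact hconn_ne heq
          · rw [List.nodup_append]
            refine ⟨List.nodup_reverse.mpr hP.edges_nodup, List.nodup_singleton _, ?_⟩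
            intro e he1 e' he2 heq
            rw [List.mem_reverse] at he1
            rw [List.mem_singleton] at he2
            subst he2
            subst heq
            exact ha1nP he1
        · intro e heQ e' hemem heq
          subst heq
          simp only [List.mem_cons, List.mem_append, List.mem_reverse,
            List.mem_singleton, List.not_mem_nil, or_false] at hemem
          rcases hemem with rfl | hmem | rfl
          · exact hc2nQ heQ
          · exact hQPdisj e heQ hmem
          · exact ha1nQ heQ
      have hC'supp : ∀ z, z ∈ C'.support ↔ (z (Fin.last d)).val ≤ k + 1 := by
        intro z
        rw [hC'def]
        simp only [Walk.mem_support_append_iff, Walk.support_cons, List.mem_cons,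
          Walk.support_nil, Walk.support_reverse, List.mem_reverse, List.mem_singleton,
          List.not_mem_nil, or_false]
        constructor
        · intro hz
          rcases hz with hz | hz
          · rw [hQsup' z] at hz; omega
          · rcases hz with hz | hz
            · subst hz; rw [layEmb_last, hv2]
            · rcases hz with hz | hz
              · have := (hPsup z).mp hz; omega
              · rcases hz with hz | hz
                · subst hz; rw [layEmb_last, hv1]; omega
                · subst hz; rw [layEmb_last, hv2]
        · intro hz
          by_cases hzk : (z (Fin.last d)).val ≤ k
          · exact Or.inr (Or.inr (Or.inl ((hPsup z).mpr hzk)))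
          · refine Or.inl ((hQsup' z).mpr ?_)
            omega
      have hC'cyc : C'.IsCycle := by
        rw [Walk.isCycle_def]
        refine ⟨hC'trail, ?_, ?_⟩
        · intro hnil
          have hmem : s(layEmb n p ⟨k + 1, hm⟩ c₂, layEmb n p ⟨k, hk⟩ a₂) ∈ C'.edges :=
            (hC'edges _).mpr (Or.inr (Or.inl rfl))
          rw [hnil] at hmem
          simp at hmem
        · have hsupTail : C'.support.tail =
              Q.support.tail ++ (P.reverse.support ++ [layEmb n p ⟨k + 1, hm⟩ c₁]) := by
            rw [hC'def, Walk.tail_support_append]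
            congr 1
            rw [Walk.support_cons, List.tail_cons, Walk.support_append, Walk.support_cons,
              Walk.support_nil, List.tail_cons]
          rw [hsupTail, List.nodup_append]
          refine ⟨hQ.support_nodup.tail, ?_, ?_⟩
          · rw [List.nodup_append]
            refine ⟨hP.reverse.support_nodup, List.nodup_singleton _, ?_⟩
            intro z hz1 z' hz2 heq
            rw [List.mem_singleton] at hz2
            subst hz2
            subst heq
            rw [Walk.support_reverse, List.mem_reverse] at hz1
            have := (hPsup _).mp hz1
            rw [layEmb_last, hv2] at this
            omega
          · intro z hz1 z' hz2 heq
            subst heq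
            have hzQ : z ∈ Q.support := List.mem_of_mem_tail hz1
            have hzk1 : (z (Fin.last d)).val = k + 1 := (hQsup' z).mp hzQ
            rw [List.mem_append, List.mem_singleton] at hz2
            rcases hz2 with hz2 | rfl
            · rw [Walk.support_reverse, List.mem_reverse] at hz2
              have := (hPsup _).mp hz2
              omega
            · have hhead : Q.support = layEmb n p ⟨k + 1, hm⟩ c₁ :: Q.support.tail :=
                Q.support_eq_cons
              have := hQ.support_nodup
              rw [hhead, List.nodup_cons] at this
              exact this.1 hz1
      have hAin : s(layEmb n p ⟨k + 1, hm⟩ a₁, layEmb n p ⟨k + 1, hm⟩ a₂) ∈ C'.edges :=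
        (hC'edges _).mpr (Or.inl ((hQed _).mpr
          ⟨hDedge _ a₁ a₂ hA, fun h' => hAC (layEmb_sym2_inj h')⟩))
      obtain ⟨P', hP', hP'sup, hP'ed⟩ := cycle_cut C' hC'cyc hAin
      refine ⟨P', hP', ?_, ?_, ?_, ?_, ?_, ?_, ?_⟩
      · intro z
        rw [hP'sup z, hC'supp z]
      · exact fun hmem => ((hP'ed _).mp hmem).2 rfl
      · refine (hP'ed _).mpr ⟨(hC'edges _).mpr (Or.inr (Or.inr (Or.inl hPB0))), ?_⟩
        exact layEmb_sym2_ne (by rw [hv2]; simp) b₁ b₂ a₁ a₂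
      · refine (hP'ed _).mpr ⟨(hC'edges _).mpr (Or.inr (Or.inr (Or.inl hPE0))), ?_⟩
        exact layEmb_sym2_ne (by rw [hv2]; simp) e₁ e₂ a₁ a₂
      · refine (hP'ed _).mpr ⟨(hC'edges _).mpr (Or.inl ((hQed _).mpr
          ⟨hDedge _ b₁ b₂ hB, fun h' => hCBne (layEmb_sym2_inj h').symm⟩)), ?_⟩
        exact fun h' => hABne (layEmb_sym2_inj h').symm
      · refine (hP'ed _).mpr ⟨(hC'edges _).mpr (Or.inl ((hQed _).mpr
          ⟨hDedge _ e₁ e₂ hE, fun h' => hCEne (layEmb_sym2_inj h').symm⟩)), ?_⟩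
        exact fun h' => hAEne (layEmb_sym2_inj h').symm
      · intro h0
        exact absurd h0 (Nat.succ_ne_zero k)
  -- Final assembly
  have hplt : p - 1 < p := by omega
  obtain ⟨P, hP, hPsup, hPAn, hPB0, hPE0, hPBm, hPEm, hPC0⟩ := key (p - 1) hplt
  have hadj : (Kd (d + 1) (Fin.snoc n p)).Adj (layEmb n p ⟨p - 1, hplt⟩ a₂)
      (layEmb n p ⟨p - 1, hplt⟩ a₁) := (layEmb_adj _ haa).symm
  have hWcyc : (Walk.cons hadj P).IsCycle := by
    rw [Walk.cons_isCycle_iff]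
    refine ⟨hP, fun hmem => hPAn ?_⟩
    rwa [Sym2.eq_swap] at hmem
  have hWham : (Walk.cons hadj P).IsHamiltonianCycle := by
    rw [Walk.isHamiltonianCycle_iff_isCycle_and_support_count_tail_eq_one]
    refine ⟨hWcyc, fun z => ?_⟩
    rw [Walk.support_cons, List.tail_cons]
    refine List.count_eq_one_of_mem hP.support_nodup ?_
    refine (hPsup z).mpr ?_
    have := layEmb_layer_lt z
    omega
  have hWedges : ∀ e, e ∈ (Walk.cons hadj P).edges ↔
      e = s(layEmb n p ⟨p - 1, hplt⟩ a₂, layEmb n p ⟨p - 1, hplt⟩ a₁) ∨ e ∈ P.edges := by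
    intro e
    rw [Walk.edges_cons, List.mem_cons]
  by_cases hp1 : p = 1
  · -- single layer: use the two original sites in layer 0
    subst hp1
    refine ⟨_, Walk.cons hadj P, hWham,
      layEmb n 1 ⟨0, hp⟩ a₁, layEmb n 1 ⟨0, hp⟩ a₂,
      layEmb n 1 ⟨0, hp⟩ c₁, layEmb n 1 ⟨0, hp⟩ c₂,
      layEmb n 1 ⟨0, hp⟩ b₁, layEmb n 1 ⟨0, hp⟩ b₂,
      layEmb n 1 ⟨0, hp⟩ e₁, layEmb n 1 ⟨0, hp⟩ e₂, ?_, ?_, ?_⟩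
    · exact ⟨(hWedges _).mpr (Or.inl Sym2.eq_swap), (hWedges _).mpr (Or.inr (hPC0 rfl)),
        fun h' => hAC (layEmb_sym2_inj h'), layEmb_twoApart hta1, layEmb_twoApart hta2⟩
    · exact ⟨(hWedges _).mpr (Or.inr hPB0), (hWedges _).mpr (Or.inr hPE0),
        fun h' => hBE (layEmb_sym2_inj h'), layEmb_twoApart htb1, layEmb_twoApart htb2⟩
    · rw [Set.eq_empty_iff_forall_notMem]
      rintro u ⟨hu1, hu2⟩
      rw [Set.mem_insert_iff, Set.mem_singleton_iff] at hu1 hu2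
      rcases hu1 with rfl | rfl <;> rcases hu2 with heq | heq
      · exact hABne (layEmb_sym2_inj heq)
      · exact hAEne (layEmb_sym2_inj heq)
      · exact hCBne (layEmb_sym2_inj heq)
      · exact hCEne (layEmb_sym2_inj heq)
  · -- at least two layers: use site (B,E) in layer 0 and in layer p-1
    refine ⟨_, Walk.cons hadj P, hWham,
      layEmb n p ⟨0, hp⟩ b₁, layEmb n p ⟨0, hp⟩ b₂,
      layEmb n p ⟨0, hp⟩ e₁, layEmb n p ⟨0, hp⟩ e₂,
      layEmb n p ⟨p - 1, hplt⟩ b₁, layEmb n p ⟨p - 1, hplt⟩ b₂,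
      layEmb n p ⟨p - 1, hplt⟩ e₁, layEmb n p ⟨p - 1, hplt⟩ e₂, ?_, ?_, ?_⟩
    · exact ⟨(hWedges _).mpr (Or.inr hPB0), (hWedges _).mpr (Or.inr hPE0),
        fun h' => hBE (layEmb_sym2_inj h'), layEmb_twoApart htb1, layEmb_twoApart htb2⟩
    · exact ⟨(hWedges _).mpr (Or.inr hPBm), (hWedges _).mpr (Or.inr hPEm),
        fun h' => hBE (layEmb_sym2_inj h'), layEmb_twoApart htb1, layEmb_twoApart htb2⟩
    · have hne : ((⟨0, hp⟩ : Fin p) : ℕ) ≠ ((⟨p - 1, hplt⟩ : Fin p) : ℕ) := by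
        show (0 : ℕ) ≠ p - 1
        omega
      rw [Set.eq_empty_iff_forall_notMem]
      rintro u ⟨hu1, hu2⟩
      rw [Set.mem_insert_iff, Set.mem_singleton_iff] at hu1 hu2
      rcases hu1 with rfl | rfl <;> rcases hu2 with heq | heq <;>
        exact layEmb_sym2_ne hne _ _ _ _ heq
end

section
/- The generalized (a,b)-knight's graph K_{a,b}(n,m) is disconnected whenever gcd(a+b, a−b) > 1 (assuming 0 < a < b and the board has at least 2 vertices). -/
/-- Generalized (a,b)-knight's graph on the board `[n] × [m]`. -/
def Kab (a b n m : ℕ) : SimpleGraph (Fin n × Fin m) where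
  Adj u v := u ≠ v ∧
    ((Nat.dist u.1.val v.1.val = a ∧ Nat.dist u.2.val v.2.val = b) ∨
     (Nat.dist u.1.val v.1.val = b ∧ Nat.dist u.2.val v.2.val = a))
  symm := by
    refine ⟨?_⟩
    rintro u v ⟨hne, (⟨h1, h2⟩ | ⟨h1, h2⟩)⟩
    · exact ⟨hne.symm, Or.inl ⟨by rw [Nat.dist_comm]; exact h1,
        by rw [Nat.dist_comm]; exact h2⟩⟩
    · exact ⟨hne.symm, Or.inr ⟨by rw [Nat.dist_comm]; exact h1,
        by rw [Nat.dist_comm]; exact h2⟩⟩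
  loopless := ⟨by rintro u ⟨hne, -⟩; exact hne rfl⟩

lemma Kab_adj_invariant {a b n m d : ℕ} (hab : a ≤ b)
    (h1 : d ∣ (a + b)) (h2 : d ∣ (b - a)) {u v : Fin n × Fin m}
    (h : (Kab a b n m).Adj u v) :
    ((u.1.val + u.2.val : ℕ) : ZMod d) = ((v.1.val + v.2.val : ℕ) : ZMod d) := by
  have hb0 : ((a : ZMod d) + b) = 0 := by
    have h1' := (ZMod.natCast_eq_zero_iff (a + b) d).mpr h1
    push_cast at h1'; linear_combination h1'
  have hba : ((b : ZMod d) - a) = 0 := by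
    have h2' := (ZMod.natCast_eq_zero_iff (b - a) d).mpr h2
    rw [Nat.cast_sub hab] at h2'; exact h2'
  obtain ⟨-, (⟨hx, hy⟩ | ⟨hx, hy⟩)⟩ := h <;>
  · have hx2 : u.1.val = v.1.val + Nat.dist u.1.val v.1.val ∨
        v.1.val = u.1.val + Nat.dist u.1.val v.1.val := by
      simp [Nat.dist]; omega
    have hy2 : u.2.val = v.2.val + Nat.dist u.2.val v.2.val ∨
        v.2.val = u.2.val + Nat.dist u.2.val v.2.val := by
      simp [Nat.dist]; omega
    rw [hx] at hx2; rw [hy] at hy2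
    rcases hx2 with hx' | hx' <;> rcases hy2 with hy' | hy' <;>
    · have ex := congrArg (Nat.cast : ℕ → ZMod d) hx'
      have ey := congrArg (Nat.cast : ℕ → ZMod d) hy'
      push_cast at ex ey
      push_cast
      first
        | linear_combination ex + ey + hb0
        | linear_combination ex + ey - hb0
        | linear_combination ex + ey + hba
        | linear_combination ex + ey - hba
        | linear_combination ex - ey + hb0
        | linear_combination ex - ey - hb0
        | linear_combination ex - ey + hba
        | linear_combination ex - ey - hba
        | linear_combination -ex + ey + hb0
        | linear_combination -ex + ey - hb0
        | linear_combination -ex + ey + hba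
        | linear_combination -ex + ey - hba
        | linear_combination -ex - ey + hb0
        | linear_combination -ex - ey - hb0
        | linear_combination -ex - ey + hba
        | linear_combination -ex - ey - hba

lemma Kab_reachable_invariant {a b n m d : ℕ} (hab : a ≤ b)
    (h1 : d ∣ (a + b)) (h2 : d ∣ (b - a)) {u v : Fin n × Fin m}
    (h : (Kab a b n m).Reachable u v) :
    ((u.1.val + u.2.val : ℕ) : ZMod d) = ((v.1.val + v.2.val : ℕ) : ZMod d) := by
  obtain ⟨w⟩ := h
  induction w with
  | nil => rfl
  | cons hadj _ ih => exact (Kab_adj_invariant hab h1 h2 hadj).trans ih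

/-- If gcd(a+b, b−a) > 1 then the (a,b)-knight's graph on a board with at least
two vertices is disconnected. -/
theorem Kab_disconnected_of_gcd (a b n m : ℕ) (ha : 0 < a) (hab : a < b)
    (hgcd : 1 < Nat.gcd (a + b) (b - a)) (hboard : 1 < n * m) :
    ¬ (Kab a b n m).Connected := by
  set d := Nat.gcd (a + b) (b - a) with hd
  have h1 : d ∣ (a + b) := Nat.gcd_dvd_left _ _
  have h2 : d ∣ (b - a) := Nat.gcd_dvd_right _ _
  haveI : Fact (1 < d) := ⟨hgcd⟩
  intro hconn
  have hn : 0 < n := Nat.pos_of_ne_zero (by rintro rfl; simp at hboard)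
  have hm : 0 < m := Nat.pos_of_ne_zero (by rintro rfl; simp at hboard)
  have hnm : 2 ≤ n ∨ 2 ≤ m := by
    by_contra h; push_neg at h
    have hle : n * m ≤ 1 * 1 := Nat.mul_le_mul (by omega) (by omega)
    omega
  have key : ∀ u v : Fin n × Fin m,
      ((u.1.val + u.2.val : ℕ) : ZMod d) = ((v.1.val + v.2.val : ℕ) : ZMod d) :=
    fun u v => Kab_reachable_invariant hab.le h1 h2 (hconn.preconnected u v)
  rcases hnm with hn2 | hm2
  · have := key (⟨0, hn⟩, ⟨0, hm⟩) (⟨1, hn2⟩, ⟨0, hm⟩)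
    simp at this
  · have := key (⟨0, hn⟩, ⟨0, hm⟩) (⟨0, hn⟩, ⟨1, hm2⟩)
    simp at this
end
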